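/- Let M be a monoid with R₁(M) ≠ {1}, fix u, v words over generators of M with [uv] = 1 and [u] ≠ 1, and define the morphism φ on words over {p, p̄, q, q̄} ∪ X by φ(x) = x for generators x of M, φ(p) = rr, φ(p̄) = r̄r̄, φ(q) = rur, φ(q̄) = r̄vr̄. Then for every word w over {p, p̄, q, q̄} ∪ X, if [φ(w)] = 1 in 𝔹_r * M then [w] = 1 in 𝔹_p * 𝔹_q * M. -/

import Mathlib

open FreeMonoid

variable {X : Type}

/-- Generators of `𝔹_p ∗ 𝔹_q ∗ M`: `Sum.inl (true, b)` is `p` (`b = true`) or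
`p̄` (`b = false`), `Sum.inl (false, b)` is `q` or `q̄`; `Sum.inr x` are the
generators of `M`. -/
abbrev PQGen (X : Type) := (Bool × Bool) ⊕ X

/-- Generators of `𝔹_r ∗ M`: `Sum.inl true` is `r`, `Sum.inl false` is `r̄`. -/
abbrev RGen (X : Type) := Bool ⊕ X

/-- Relations of `𝔹_p ∗ 𝔹_q ∗ M`: `p p̄ = 1`, `q q̄ = 1` and the relations `R` of `M`. -/
def pqRel (R : FreeMonoid X → FreeMonoid X → Prop) :
    FreeMonoid (PQGen X) → FreeMonoid (PQGen X) → Prop := fun w₁ w₂ =>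
  (∃ s : Bool, w₁ = of (Sum.inl (s, true)) * of (Sum.inl (s, false)) ∧ w₂ = 1) ∨
  (∃ x y : FreeMonoid X, R x y ∧
    w₁ = FreeMonoid.map (Sum.inr : X → PQGen X) x ∧
    w₂ = FreeMonoid.map (Sum.inr : X → PQGen X) y)

/-- Relations of `𝔹_r ∗ M`: `r r̄ = 1` and the relations `R` of `M`. -/
def rRel (R : FreeMonoid X → FreeMonoid X → Prop) :
    FreeMonoid (RGen X) → FreeMonoid (RGen X) → Prop := fun w₁ w₂ =>
  (w₁ = of (Sum.inl true) * of (Sum.inl false) ∧ w₂ = 1) ∨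
  (∃ x y : FreeMonoid X, R x y ∧
    w₁ = FreeMonoid.map (Sum.inr : X → RGen X) x ∧
    w₂ = FreeMonoid.map (Sum.inr : X → RGen X) y)

/-- Embedding of words over `X` into words over `{r, r̄} ∪ X`. -/
def embR : FreeMonoid X →* FreeMonoid (RGen X) :=
  FreeMonoid.map Sum.inr

/-- The morphism `φ` determined by `φ(x) = x` for generators `x` of `M`,
`φ(p) = rr`, `φ(p̄) = r̄r̄`, `φ(q) = rur`, `φ(q̄) = r̄vr̄`. -/
def phiMor (u v : FreeMonoid X) : FreeMonoid (PQGen X) →* FreeMonoid (RGen X) :=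
  FreeMonoid.lift fun g =>
    match g with
    | Sum.inl (true, true) => of (Sum.inl true) * of (Sum.inl true)
    | Sum.inl (true, false) => of (Sum.inl false) * of (Sum.inl false)
    | Sum.inl (false, true) => of (Sum.inl true) * embR u * of (Sum.inl true)
    | Sum.inl (false, false) => of (Sum.inl false) * embR v * of (Sum.inl false)
    | Sum.inr x => of (Sum.inr x)

namespace Stmt6Aux

open Sum

variable (R : FreeMonoid X → FreeMonoid X → Prop) (u v : FreeMonoid X)

abbrev Mq := (conGen (rRel R)).Quotient

abbrev Nq := (conGen (pqRel R)).Quotient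

abbrev SS := Mq R × List (Bool × Mq R)

open Classical in
noncomputable def actR : SS R → SS R
  | (m, []) => (1, [(true, m)])
  | (m, (true, m₁) :: ℓ) => (1, (true, m) :: (true, m₁) :: ℓ)
  | (m, (false, m₁) :: ℓ) =>
      if m = 1 then (m₁, ℓ) else (1, (true, m) :: (false, m₁) :: ℓ)

def actRb : SS R → SS R := fun s => (1, (false, s.1) :: s.2)

noncomputable def act : RGen X → Function.End (SS R)
  | inl true => actR R
  | inl false => actRb R
  | inr x => fun s => (((of (inr x) : FreeMonoid (RGen X)) : Mq R) * s.1, s.2)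

noncomputable def ψ : FreeMonoid (RGen X) →* Function.End (SS R) :=
  FreeMonoid.lift (act R)

lemma actR_nil (m : Mq R) : actR R (m, []) = (1, [(true, m)]) := rfl

lemma actR_true (m m₁ : Mq R) (ℓ) :
    actR R (m, (true, m₁) :: ℓ) = (1, (true, m) :: (true, m₁) :: ℓ) := rfl

lemma actR_pop (m₁ : Mq R) (ℓ) : actR R (1, (false, m₁) :: ℓ) = (m₁, ℓ) := by
  simp [actR]

lemma actR_push {m : Mq R} (h : m ≠ 1) (m₁ : Mq R) (ℓ) :
    actR R (m, (false, m₁) :: ℓ) = (1, (true, m) :: (false, m₁) :: ℓ) := by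
  simp [actR, h]

lemma ψ_r : ψ R (of (inl true)) = actR R := by
  unfold ψ; rw [FreeMonoid.lift_eval_of]; rfl

lemma ψ_rb : ψ R (of (inl false)) = actRb R := by
  unfold ψ; rw [FreeMonoid.lift_eval_of]; rfl

lemma ψ_x (x : X) : ψ R (of (inr x)) =
    fun s : SS R => (((of (inr x) : FreeMonoid (RGen X)) : Mq R) * s.1, s.2) := by
  unfold ψ; rw [FreeMonoid.lift_eval_of]; rfl

lemma psi_emb (w : FreeMonoid X) (s : SS R) :
    ψ R (embR w) s = (((embR w : FreeMonoid (RGen X)) : Mq R) * s.1, s.2) := by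
  induction w using FreeMonoid.recOn with
  | one =>
      simp only [map_one]
      show s = _
      simp
  | of_mul x w ih =>
      have h1 : embR (of x * w) = of (inr x) * embR w := by
        rw [map_mul]; rfl
      rw [h1, map_mul]
      show ψ R (of (inr x)) (ψ R (embR w) s) = _
      rw [ih, ψ_x]
      simp [Con.coe_mul, mul_assoc]

lemma psi_resp : ∀ a b, conGen (rRel R) a b → ψ R a = ψ R b := by
  have key : conGen (rRel R) ≤ Con.ker (ψ R) := by
    apply Con.conGen_le.mpr
    intro a b hab
    rw [Con.ker_rel]
    rcases hab with ⟨h1, h2⟩ | ⟨x, y, hR, hx, hy⟩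
    · subst h1; subst h2
      rw [map_mul, map_one]
      funext s
      show ψ R (of (inl true)) (ψ R (of (inl false)) s) = s
      rw [ψ_r, ψ_rb]
      obtain ⟨m, ℓ⟩ := s
      show actR R (1, (false, m) :: ℓ) = (m, ℓ)
      exact actR_pop R m ℓ
    · subst hx; subst hy
      funext s
      show ψ R (embR x) s = ψ R (embR y) s
      rw [psi_emb, psi_emb]
      have : ((embR x : FreeMonoid (RGen X)) : Mq R) = ((embR y : FreeMonoid (RGen X)) : Mq R) :=
        (Con.eq _).mpr (ConGen.Rel.of _ _ (Or.inr ⟨x, y, hR, rfl, rfl⟩))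
      rw [this]
  intro a b h
  exact (Con.ker_rel _).mp (key h)

noncomputable def Pe : Nq R := ((of (inl (true, true)) : FreeMonoid (PQGen X)) : Nq R)
noncomputable def Pb : Nq R := ((of (inl (true, false)) : FreeMonoid (PQGen X)) : Nq R)
noncomputable def Qe : Nq R := ((of (inl (false, true)) : FreeMonoid (PQGen X)) : Nq R)
noncomputable def Qb : Nq R := ((of (inl (false, false)) : FreeMonoid (PQGen X)) : Nq R)
noncomputable def Ue : Mq R := ((embR u : FreeMonoid (RGen X)) : Mq R)
noncomputable def Ve : Mq R := ((embR v : FreeMonoid (RGen X)) : Mq R)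

lemma PPb : Pe R * Pb R = 1 := by
  have h : ((of (inl (true, true)) * of (inl (true, false)) : FreeMonoid (PQGen X)) : Nq R)
      = ((1 : FreeMonoid (PQGen X)) : Nq R) :=
    (Con.eq _).mpr (ConGen.Rel.of _ _ (Or.inl ⟨true, rfl, rfl⟩))
  rw [Con.coe_mul, Con.coe_one] at h
  exact h

lemma QQb : Qe R * Qb R = 1 := by
  have h : ((of (inl (false, true)) * of (inl (false, false)) : FreeMonoid (PQGen X)) : Nq R)
      = ((1 : FreeMonoid (PQGen X)) : Nq R) :=
    (Con.eq _).mpr (ConGen.Rel.of _ _ (Or.inl ⟨false, rfl, rfl⟩))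
  rw [Con.coe_mul, Con.coe_one] at h
  exact h

noncomputable def θ : FreeMonoid (RGen X) →* Nq R :=
  FreeMonoid.lift fun g =>
    match g with
    | inl true => Pe R
    | inl false => Pb R
    | inr x => ((of (inr x) : FreeMonoid (PQGen X)) : Nq R)

lemma θ_emb (w : FreeMonoid X) :
    θ R (embR w) = ((FreeMonoid.map Sum.inr w : FreeMonoid (PQGen X)) : Nq R) := by
  induction w using FreeMonoid.recOn with
  | one => simp only [map_one, Con.coe_one]
  | of_mul x w ih =>
      have h1 : embR (of x * w) = of (inr x) * embR w := by rw [map_mul]; rfl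
      have h2 : (FreeMonoid.map (Sum.inr : X → PQGen X)) (of x * w)
          = of (inr x) * FreeMonoid.map Sum.inr w := by rw [map_mul]; rfl
      rw [h1, map_mul, ih, h2, Con.coe_mul]
      congr 1

noncomputable def μ : Mq R →* Nq R :=
  Con.lift _ (θ R) (Con.conGen_le.mpr (fun a b hab => by
    rw [Con.ker_rel]
    rcases hab with ⟨h1, h2⟩ | ⟨x, y, hR, hx, hy⟩
    · subst h1; subst h2
      rw [map_mul, map_one]
      have ha : θ R (of (inl true)) = Pe R := by unfold θ; rw [FreeMonoid.lift_eval_of]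
      have hb : θ R (of (inl false)) = Pb R := by unfold θ; rw [FreeMonoid.lift_eval_of]
      rw [ha, hb, PPb]
    · subst hx; subst hy
      have hx' : (FreeMonoid.map (Sum.inr : X → RGen X)) x = embR x := rfl
      have hy' : (FreeMonoid.map (Sum.inr : X → RGen X)) y = embR y := rfl
      rw [hx', hy', θ_emb, θ_emb]
      exact (Con.eq _).mpr (ConGen.Rel.of _ _ (Or.inr ⟨x, y, hR, rfl, rfl⟩))))

lemma μ_coe (a : FreeMonoid (RGen X)) : μ R ((a : Mq R)) = θ R a := Con.lift_coe _ _

def CC (ε₁ : Bool) (m₁ : Mq R) (ε₂ : Bool) : Prop :=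
  match ε₁, ε₂ with
  | true, true => m₁ = 1 ∨ m₁ = Ue R u
  | true, false => m₁ = Ue R u ∨ m₁ = Ve R v
  | false, false => m₁ = 1 ∨ m₁ = Ve R v
  | false, true => False

inductive Good : List (Bool × Mq R) → Prop
  | nil : Good []
  | cons {ε₁ ε₂ : Bool} {m₁ m₂ : Mq R} {ℓ : List (Bool × Mq R)} :
      CC R u v ε₁ m₁ ε₂ → Good ℓ → Good ((ε₁, m₁) :: (ε₂, m₂) :: ℓ)

def TS (ε₁ : Bool) (m₁ : Mq R) (ε₂ : Bool) (n : Nq R) : Prop :=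
  match ε₁, ε₂ with
  | true, true => (m₁ = 1 ∧ n = Pe R) ∨ (m₁ = Ue R u ∧ n = Qe R)
  | true, false => (m₁ = Ue R u ∧ n = Qe R * Pb R) ∨ (m₁ = Ve R v ∧ n = Pe R * Qb R)
  | false, false => (m₁ = 1 ∧ n = Pb R) ∨ (m₁ = Ve R v ∧ n = Qb R)
  | false, true => False

def DD : List (Bool × Mq R) → Mq R → Nq R → Prop
  | [], m, n => n = μ R m
  | (ε₁, m₁) :: (ε₂, m₂) :: ℓ, m, n =>
      ∃ t n', TS R u v ε₁ m₁ ε₂ t ∧ DD ℓ m₂ n' ∧ n = μ R m * (t * n')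
  | _ :: [], _, _ => False

lemma DD_nil (m : Mq R) (n : Nq R) : DD R u v [] m n ↔ n = μ R m := Iff.rfl

lemma DD_cons (ε₁ ε₂ : Bool) (m₁ m₂ m : Mq R) (ℓ) (n : Nq R) :
    DD R u v ((ε₁, m₁) :: (ε₂, m₂) :: ℓ) m n ↔
      ∃ t n', TS R u v ε₁ m₁ ε₂ t ∧ DD R u v ℓ m₂ n' ∧ n = μ R m * (t * n') := Iff.rfl

lemma DD_lmul (c : Mq R) {ℓ : List (Bool × Mq R)} {m : Mq R} {n : Nq R}
    (h : DD R u v ℓ m n) : DD R u v ℓ (c * m) (μ R c * n) := by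
  match ℓ with
  | [] =>
      rw [DD_nil] at h ⊢
      rw [h, map_mul]
  | [a] => exact False.elim h
  | (ε₁, m₁) :: (ε₂, m₂) :: ℓ' =>
      obtain ⟨t0, n', hts, hn', heq⟩ := h
      exact ⟨t0, n', hts, hn', by rw [heq, map_mul, mul_assoc]⟩

lemma θ_x (x : X) : θ R (of (inr x)) = ((of (inr x) : FreeMonoid (PQGen X)) : Nq R) :=
  FreeMonoid.lift_eval_of _ _

theorem step (hUne : Ue R u ≠ 1) (hVne : Ve R v ≠ 1) (hUV : Ue R u * Ve R v = 1)
    (g : PQGen X) (m : Mq R) (ℓ : List (Bool × Mq R)) (hg : Good R u v ℓ)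
    (n : Nq R) (hn : DD R u v ℓ m n) :
    Good R u v (ψ R (phiMor u v (of g)) (m, ℓ)).2 ∧
      DD R u v (ψ R (phiMor u v (of g)) (m, ℓ)).2 (ψ R (phiMor u v (of g)) (m, ℓ)).1
        (((of g : FreeMonoid (PQGen X)) : Nq R) * n) := by
  obtain (⟨b₁, b₂⟩ | x) := g
  case inr =>
    have hφ : ψ R (phiMor u v (of (inr x))) (m, ℓ)
        = (((of (inr x) : FreeMonoid (RGen X)) : Mq R) * m, ℓ) := by
      have h1 : phiMor u v (of (inr x)) = of (inr x) := FreeMonoid.lift_eval_of _ _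
      rw [h1, ψ_x]
    rw [hφ]
    refine ⟨hg, ?_⟩
    have h2 := DD_lmul R u v ((of (inr x) : FreeMonoid (RGen X)) : Mq R) hn
    rwa [μ_coe, θ_x] at h2
  case inl =>
    cases b₁ <;> cases b₂
    -- q̄ : (false, false)
    case false.false =>
      have h1 : phiMor u v (of (inl (false, false)))
          = of (inl false) * embR v * of (inl false) := FreeMonoid.lift_eval_of _ _
      have hφ : ψ R (phiMor u v (of (inl (false, false)))) (m, ℓ)
          = (1, (false, Ve R v) :: (false, m) :: ℓ) := by
        rw [h1, map_mul, map_mul, ψ_rb]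
        show actRb R (ψ R (embR v) (actRb R (m, ℓ))) = _
        rw [psi_emb]
        show actRb R (Ve R v * 1, (false, m) :: ℓ) = _
        rw [mul_one]
        rfl
      rw [hφ]
      refine ⟨Good.cons (Or.inr rfl) hg, ?_⟩
      refine ⟨Qb R, n, Or.inr ⟨rfl, rfl⟩, hn, ?_⟩
      rw [map_one, one_mul]
      rfl
    -- q : (false, true)
    case false.true =>
      have h1 : phiMor u v (of (inl (false, true)))
          = of (inl true) * embR u * of (inl true) := FreeMonoid.lift_eval_of _ _
      have hkey : ∀ s : SS R, ψ R (phiMor u v (of (inl (false, true)))) s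
          = actR R (ψ R (embR u) (actR R s)) := by
        intro s
        rw [h1, map_mul, map_mul, ψ_r]
        rfl
      rcases ℓ with _ | ⟨⟨b, m₁⟩, ℓr⟩
      · -- ℓ = []
        have hφ : ψ R (phiMor u v (of (inl (false, true)))) (m, [])
            = (1, [(true, Ue R u), (true, m)]) := by
          rw [hkey, actR_nil, psi_emb]
          show actR R (Ue R u * 1, [(true, m)]) = _
          rw [mul_one, actR_true]
        rw [hφ]
        refine ⟨Good.cons (Or.inr rfl) Good.nil, ?_⟩
        refine ⟨Qe R, n, Or.inr ⟨rfl, rfl⟩, hn, ?_⟩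
        rw [map_one, one_mul]
        rfl
      · cases b
        case true =>
          have hφ : ψ R (phiMor u v (of (inl (false, true)))) (m, (true, m₁) :: ℓr)
              = (1, (true, Ue R u) :: (true, m) :: (true, m₁) :: ℓr) := by
            rw [hkey, actR_true, psi_emb]
            show actR R (Ue R u * 1, (true, m) :: (true, m₁) :: ℓr) = _
            rw [mul_one, actR_true]
          rw [hφ]
          refine ⟨Good.cons (Or.inr rfl) hg, ?_⟩
          refine ⟨Qe R, n, Or.inr ⟨rfl, rfl⟩, hn, ?_⟩
          rw [map_one, one_mul]
          rfl
        case false =>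
          rcases ℓr with _ | ⟨⟨ε₂, m₂⟩, ℓ'⟩
          · cases hg
          · cases ε₂
            case true =>
              cases hg with
              | cons hcc hgood => exact False.elim hcc
            case false =>
              cases hg with
              | cons hcc hgood =>
                by_cases hm : m = 1
                · subst hm
                  rcases hcc with rfl | rfl
                  · -- m₁ = 1 : pop then push with Ue
                    have hφ : ψ R (phiMor u v (of (inl (false, true))))
                        ((1 : Mq R), (false, (1 : Mq R)) :: (false, m₂) :: ℓ')
                        = (1, (true, Ue R u) :: (false, m₂) :: ℓ') := by
                      rw [hkey, actR_pop, psi_emb]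
                      show actR R (Ue R u * 1, (false, m₂) :: ℓ') = _
                      rw [mul_one, actR_push R hUne]
                    rw [hφ]
                    refine ⟨Good.cons (Or.inl rfl) hgood, ?_⟩
                    obtain ⟨t, n', hts, hn', heq⟩ := hn
                    rcases hts with ⟨-, rfl⟩ | ⟨hv1, -⟩
                    · refine ⟨Qe R * Pb R, n', Or.inl ⟨rfl, rfl⟩, hn', ?_⟩
                      rw [heq, map_one, one_mul, one_mul, mul_assoc]
                      rfl
                    · exact absurd hv1.symm hVne
                  · -- m₁ = Ve : pop, u·v = 1, pop
                    have hφ : ψ R (phiMor u v (of (inl (false, true))))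
                        ((1 : Mq R), (false, Ve R v) :: (false, m₂) :: ℓ')
                        = (m₂, ℓ') := by
                      rw [hkey, actR_pop, psi_emb]
                      show actR R (Ue R u * Ve R v, (false, m₂) :: ℓ') = _
                      rw [hUV, actR_pop]
                    rw [hφ]
                    refine ⟨hgood, ?_⟩
                    obtain ⟨t, n', hts, hn', heq⟩ := hn
                    rcases hts with ⟨hv1, -⟩ | ⟨-, rfl⟩
                    · exact absurd hv1 hVne
                    · rw [heq, map_one, one_mul]
                      have he : ((of (inl (false, true)) : FreeMonoid (PQGen X)) : Nq R)
                          * (Qb R * n') = n' := by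
                        show Qe R * (Qb R * n') = n'
                        rw [← mul_assoc, QQb, one_mul]
                      rw [he]
                      exact hn'
                · -- m ≠ 1 : push, push
                  have hφ : ψ R (phiMor u v (of (inl (false, true))))
                      (m, (false, m₁) :: (false, m₂) :: ℓ')
                      = (1, (true, Ue R u) :: (true, m) :: (false, m₁) :: (false, m₂) :: ℓ') := by
                    rw [hkey, actR_push R hm, psi_emb]
                    show actR R (Ue R u * 1, (true, m) :: (false, m₁) :: (false, m₂) :: ℓ') = _
                    rw [mul_one, actR_true]
                  rw [hφ]
                  refine ⟨Good.cons (Or.inr rfl) (Good.cons hcc hgood), ?_⟩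
                  refine ⟨Qe R, n, Or.inr ⟨rfl, rfl⟩, hn, ?_⟩
                  rw [map_one, one_mul]
                  rfl
    -- p̄ : (true, false)
    case true.false =>
      have h1 : phiMor u v (of (inl (true, false)))
          = of (inl false) * of (inl false) := FreeMonoid.lift_eval_of _ _
      have hφ : ψ R (phiMor u v (of (inl (true, false)))) (m, ℓ)
          = (1, (false, (1 : Mq R)) :: (false, m) :: ℓ) := by
        rw [h1, map_mul, ψ_rb]
        rfl
      rw [hφ]
      refine ⟨Good.cons (Or.inl rfl) hg, ?_⟩
      refine ⟨Pb R, n, Or.inl ⟨rfl, rfl⟩, hn, ?_⟩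
      rw [map_one, one_mul]
      rfl
    -- p : (true, true)
    case true.true =>
      have h1 : phiMor u v (of (inl (true, true)))
          = of (inl true) * of (inl true) := FreeMonoid.lift_eval_of _ _
      have hkey : ∀ s : SS R, ψ R (phiMor u v (of (inl (true, true)))) s
          = actR R (actR R s) := by
        intro s
        rw [h1, map_mul, ψ_r]
        rfl
      rcases ℓ with _ | ⟨⟨b, m₁⟩, ℓr⟩
      · have hφ : ψ R (phiMor u v (of (inl (true, true)))) (m, [])
            = (1, [(true, (1 : Mq R)), (true, m)]) := by
          rw [hkey, actR_nil, actR_true]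
        rw [hφ]
        refine ⟨Good.cons (Or.inl rfl) Good.nil, ?_⟩
        refine ⟨Pe R, n, Or.inl ⟨rfl, rfl⟩, hn, ?_⟩
        rw [map_one, one_mul]
        rfl
      · cases b
        case true =>
          have hφ : ψ R (phiMor u v (of (inl (true, true)))) (m, (true, m₁) :: ℓr)
              = (1, (true, (1 : Mq R)) :: (true, m) :: (true, m₁) :: ℓr) := by
            rw [hkey, actR_true, actR_true]
          rw [hφ]
          refine ⟨Good.cons (Or.inl rfl) hg, ?_⟩
          refine ⟨Pe R, n, Or.inl ⟨rfl, rfl⟩, hn, ?_⟩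
          rw [map_one, one_mul]
          rfl
        case false =>
          rcases ℓr with _ | ⟨⟨ε₂, m₂⟩, ℓ'⟩
          · cases hg
          · cases ε₂
            case true =>
              cases hg with
              | cons hcc hgood => exact False.elim hcc
            case false =>
              cases hg with
              | cons hcc hgood =>
                by_cases hm : m = 1
                · subst hm
                  rcases hcc with rfl | rfl
                  · -- m₁ = 1 : pop pop
                    have hφ : ψ R (phiMor u v (of (inl (true, true))))
                        ((1 : Mq R), (false, (1 : Mq R)) :: (false, m₂) :: ℓ')
                        = (m₂, ℓ') := by
                      rw [hkey, actR_pop, actR_pop]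
                    rw [hφ]
                    refine ⟨hgood, ?_⟩
                    obtain ⟨t, n', hts, hn', heq⟩ := hn
                    rcases hts with ⟨-, rfl⟩ | ⟨hv1, -⟩
                    · rw [heq, map_one, one_mul]
                      have he : ((of (inl (true, true)) : FreeMonoid (PQGen X)) : Nq R)
                          * (Pb R * n') = n' := by
                        show Pe R * (Pb R * n') = n'
                        rw [← mul_assoc, PPb, one_mul]
                      rw [he]
                      exact hn'
                    · exact absurd hv1.symm hVne
                  · -- m₁ = Ve : pop then push
                    have hφ : ψ R (phiMor u v (of (inl (true, true))))
                        ((1 : Mq R), (false, Ve R v) :: (false, m₂) :: ℓ')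
                        = (1, (true, Ve R v) :: (false, m₂) :: ℓ') := by
                      rw [hkey, actR_pop, actR_push R hVne]
                    rw [hφ]
                    refine ⟨Good.cons (Or.inr rfl) hgood, ?_⟩
                    obtain ⟨t, n', hts, hn', heq⟩ := hn
                    rcases hts with ⟨hv1, -⟩ | ⟨-, rfl⟩
                    · exact absurd hv1 hVne
                    · refine ⟨Pe R * Qb R, n', Or.inr ⟨rfl, rfl⟩, hn', ?_⟩
                      rw [heq, map_one, one_mul, one_mul, mul_assoc]
                      rfl
                · have hφ : ψ R (phiMor u v (of (inl (true, true))))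
                      (m, (false, m₁) :: (false, m₂) :: ℓ')
                      = (1, (true, (1 : Mq R)) :: (true, m) :: (false, m₁) :: (false, m₂) :: ℓ') := by
                    rw [hkey, actR_push R hm, actR_true]
                  rw [hφ]
                  refine ⟨Good.cons (Or.inl rfl) (Good.cons hcc hgood), ?_⟩
                  refine ⟨Pe R, n, Or.inl ⟨rfl, rfl⟩, hn, ?_⟩
                  rw [map_one, one_mul]
                  rfl

theorem main (hUne : Ue R u ≠ 1) (hVne : Ve R v ≠ 1) (hUV : Ue R u * Ve R v = 1)
    (w : FreeMonoid (PQGen X)) :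
    Good R u v (ψ R (phiMor u v w) ((1 : Mq R), [])).2 ∧
      DD R u v (ψ R (phiMor u v w) ((1 : Mq R), [])).2
        (ψ R (phiMor u v w) ((1 : Mq R), [])).1 ((w : Nq R)) := by
  induction w using FreeMonoid.recOn with
  | one =>
      rw [map_one, map_one]
      refine ⟨Good.nil, ?_⟩
      show ((1 : FreeMonoid (PQGen X)) : Nq R) = μ R 1
      rw [map_one, Con.coe_one]
  | of_mul g w' ihw =>
      obtain ⟨hG, hD⟩ := ihw
      have key : ψ R (phiMor u v (of g * w')) ((1 : Mq R), [])
          = ψ R (phiMor u v (of g)) (ψ R (phiMor u v w') ((1 : Mq R), [])) := by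
        rw [map_mul, map_mul]
        rfl
      have hs := step R u v hUne hVne hUV g
        (ψ R (phiMor u v w') ((1 : Mq R), [])).1
        (ψ R (phiMor u v w') ((1 : Mq R), [])).2 hG _ hD
      rw [Prod.mk.eta] at hs
      rw [key, Con.coe_mul]
      exact hs

end Stmt6Aux

/-- Let `M` be a monoid with `R₁(M) ≠ {1}`, witnessed by words
`u, v` over the generators of `M` with `[uv] = 1` and `[u] ≠ 1`. Then for every
word `w` over `{p, p̄, q, q̄} ∪ X`, if `[φ(w)] = 1` in `𝔹_r ∗ M`, then
`[w] = 1` in `𝔹_p ∗ 𝔹_q ∗ M`. -/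
theorem phi_reflects_identity (R : FreeMonoid X → FreeMonoid X → Prop)
    (u v : FreeMonoid X)
    (huv : conGen (rRel R) (embR u * embR v) 1)
    (hu : ¬ conGen (rRel R) (embR u) 1)
    (w : FreeMonoid (PQGen X))
    (hw : conGen (rRel R) (phiMor u v w) 1) :
    conGen (pqRel R) w 1 := by
  classical
  have hUne : Stmt6Aux.Ue R u ≠ 1 := by
    intro h
    apply hu
    have h' : ((embR u : FreeMonoid (RGen X)) : Stmt6Aux.Mq R)
        = ((1 : FreeMonoid (RGen X)) : Stmt6Aux.Mq R) := by
      rw [Con.coe_one]; exact h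
    exact (Con.eq _).mp h'
  have hUV : Stmt6Aux.Ue R u * Stmt6Aux.Ve R v = 1 := by
    have h' : ((embR u * embR v : FreeMonoid (RGen X)) : Stmt6Aux.Mq R)
        = ((1 : FreeMonoid (RGen X)) : Stmt6Aux.Mq R) := (Con.eq _).mpr huv
    rw [Con.coe_mul, Con.coe_one] at h'
    exact h'
  have hVne : Stmt6Aux.Ve R v ≠ 1 := by
    intro h
    apply hUne
    rw [← hUV, h, mul_one]
  have hmain := Stmt6Aux.main R u v hUne hVne hUV w
  have hψ : Stmt6Aux.ψ R (phiMor u v w) = Stmt6Aux.ψ R 1 :=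
    Stmt6Aux.psi_resp R _ _ hw
  rw [map_one] at hψ
  rw [hψ] at hmain
  obtain ⟨-, hD⟩ := hmain
  have hD' : ((w : Stmt6Aux.Nq R)) = Stmt6Aux.μ R 1 := hD
  rw [map_one] at hD'
  have : ((w : Stmt6Aux.Nq R)) = ((1 : FreeMonoid (PQGen X)) : Stmt6Aux.Nq R) := by
    rw [Con.coe_one]; exact hD'
  exact (Con.eq _).mp this
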